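/- Let B₃ be the braid group on three strands, presented with generators s, t and relation s·t·s = t·s·t, let 𝒯(a₁,…,aₙ) = s^{a₁}·t^{−a₂}·s^{a₃}·⋯ ∈ B₃, and let E = 𝒯(1,−1,1) = s·t·s. Then for every integer m, every even n ≥ 2, and every integer sequence (a₁,…,aₙ), the identity 𝒯(−2)·𝒯(a₁,a₂,…,aₙ)·E^{2m}·𝒯(2) = 𝒯(a₁−2,a₂,…,aₙ,2)·E^{2m} holds in B₃. -/

import Mathlib

/-- The single braid relation `s·t·s = t·s·t` for the braid group on three strands,
written as a relator in the free group on two generators. -/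
def braidRels : Set (FreeGroup (Fin 2)) :=
  { FreeGroup.of 0 * FreeGroup.of 1 * FreeGroup.of 0 *
    (FreeGroup.of 1 * FreeGroup.of 0 * FreeGroup.of 1)⁻¹ }

/-- The braid group on three strands, presented with generators `s`, `t`
and the single relation `s·t·s = t·s·t`. -/
abbrev B3 : Type := PresentedGroup braidRels

/-- The first generator `s` of `B₃`. -/
def s : B3 := PresentedGroup.of 0

/-- The second generator `t` of `B₃`. -/
def t : B3 := PresentedGroup.of 1

/-- The half-twist `Δ = s·t·s` (the 3-braid `E = 𝒯(1,−1,1)`). -/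
def Δ : B3 := s * t * s


lemma braid_rel : s * t * s = t * s * t := by
  have h : (QuotientGroup.mk (FreeGroup.of 0 * FreeGroup.of 1 * FreeGroup.of 0 *
      (FreeGroup.of 1 * FreeGroup.of 0 * FreeGroup.of 1)⁻¹ : FreeGroup (Fin 2)) :
      PresentedGroup braidRels) = 1 := by
    apply (QuotientGroup.eq_one_iff _).2
    exact Subgroup.subset_normalClosure rfl
  have h2 : (s * t * s) * (t * s * t)⁻¹ = 1 := by
    have h' := h
    simp [mul_assoc] at h'
    simp [s, t, PresentedGroup.of, mul_assoc]
    exact h'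
  group at h2 ⊢
  exact mul_inv_eq_one.mp h2

lemma delta_s : Δ * s = t * Δ := by
  show (s*t*s)*s = t*(s*t*s)
  conv_lhs => rw [braid_rel]
  group

lemma delta_t : Δ * t = s * Δ := by
  show (s*t*s)*t = s*(s*t*s)
  conv_rhs => rw [braid_rel]
  group

lemma d2_comm_s : Commute s (Δ * Δ) := by
  unfold Commute SemiconjBy
  rw [mul_assoc Δ Δ s, delta_s, ← mul_assoc Δ t Δ, delta_t, mul_assoc]

/-- Auxiliary function building `𝒯(a₁,…,aₙ)`: when the flag is `true` the next
entry is a power of `s` (horizontal twists on the top two strands), when `false`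
it is an inverse power of `t`. -/
def Tgo : Bool → List ℤ → B3
  | _, [] => 1
  | true, a :: l => s ^ a * Tgo false l
  | false, a :: l => t ^ (-a) * Tgo true l

/-- The 3-braid `𝒯(a₁,…,aₙ) = s^{a₁} · t^{−a₂} · s^{a₃} · t^{−a₄} · ⋯` in `B₃`. -/
def T (l : List ℤ) : B3 := Tgo true l

/-- The special 3-braid `E = 𝒯(1,−1,1) = s·t·s`. -/
def E : B3 := T [1, -1, 1]


lemma E_eq : E = Δ := by
  simp [E, T, Tgo, Δ, mul_assoc]

lemma Tgo_concat (c : ℤ) : ∀ (l : List ℤ) (b : Bool),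
    Tgo b (l ++ [c]) = Tgo b l * Tgo (xor b l.length.bodd) [c] := by
  intro l
  induction l with
  | nil => intro b; cases b <;> simp [Tgo]
  | cons a l ih =>
    intro b
    cases b <;> simp [Tgo, ih, Nat.bodd_succ, mul_assoc]

/-- The even-power-of-`E` computation in the proof of Theorem 3.8: for every integer `m`
and every integer sequence `(a₁,…,aₙ)` of even length `n ≥ 2`,
`𝒯(−2)·𝒯(a₁,a₂,…,aₙ)·E^{2m}·𝒯(2) = 𝒯(a₁−2,a₂,…,aₙ,2)·E^{2m}` in `B₃`. -/
theorem gamma2_even_power (m a₁ : ℤ) (rest : List ℤ)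
    (heven : Even (a₁ :: rest).length) :
    T [-2] * T (a₁ :: rest) * E ^ (2 * m) * T [2] =
      T ((a₁ - 2) :: (rest ++ [2])) * E ^ (2 * m) := by
  have hodd : rest.length.bodd = true := by
    rcases heven with ⟨k, hk⟩
    simp only [List.length_cons] at hk
    have h1 : rest.length % 2 = 1 := by omega
    have h2 := Nat.mod_two_of_bodd rest.length
    cases h : rest.length.bodd
    · rw [h] at h2; simp at h2; omega
    · rfl
  have hc : Commute (s ^ (2:ℤ)) (E ^ (2 * m)) := by
    rw [E_eq, zpow_mul, zpow_two]
    exact (d2_comm_s.zpow_right m).zpow_left 2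
  have hcat := Tgo_concat 2 rest false
  rw [hodd] at hcat
  simp only [T, Tgo, mul_one, zpow_one, neg_neg]
  rw [hcat]
  simp only [Bool.xor, Bool.false_bne, Tgo, mul_one]
  rw [mul_assoc, ← hc.eq]
  group
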